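/- For real x > 1, (x^2 - 1)·ln x < 4x·(1 - x + x·ln x). -/

import Mathlib

-- auxiliary: 2(x-1) < (x+1) log x for x > 1
lemma aux_log_lb (x : ℝ) (hx : x > 1) : 2 * (x - 1) < (x + 1) * Real.log x := by
  set g : ℝ → ℝ := fun y => (y + 1) * Real.log y - 2 * (y - 1) with hg
  have key : StrictMonoOn g (Set.Ici 1) := by
    apply strictMonoOn_of_deriv_pos (convex_Ici 1)
    · apply ContinuousOn.sub
      · exact (continuousOn_id.add continuousOn_const).mul
          (Real.continuousOn_log.mono (fun y hy => by
            simp only [Set.mem_Ici] at hy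
            simp only [Set.mem_compl_iff, Set.mem_singleton_iff]
            linarith))
      · exact continuousOn_const.mul (continuousOn_id.sub continuousOn_const)
    · intro y hy
      rw [interior_Ici] at hy
      have hy1 : (1:ℝ) < y := hy
      have hy0 : (0:ℝ) < y := by linarith
      have hd : HasDerivAt g (Real.log y + (y + 1) / y - 2) y := by
        have h1 : HasDerivAt (fun y : ℝ => (y + 1) * Real.log y)
            (1 * Real.log y + (y + 1) * y⁻¹) y :=
          ((hasDerivAt_id y).add_const 1).mul (Real.hasDerivAt_log (ne_of_gt hy0))
        have h2 : HasDerivAt (fun y : ℝ => 2 * (y - 1)) 2 y := by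
          simpa using ((hasDerivAt_id y).sub_const 1).const_mul 2
        have := h1.sub h2
        convert this using 1
        · rfl
        · rfl
        · rfl
        · ring
      rw [hd.deriv]
      have hlog : 1 - 1/y < Real.log y := by
        have := Real.log_lt_sub_one_of_pos (x := 1/y) (by positivity)
          (by intro h; rw [div_eq_one_iff_eq (ne_of_gt hy0)] at h; linarith)
        rw [Real.log_div one_ne_zero (ne_of_gt hy0), Real.log_one] at this
        linarith
      have : (y + 1) / y = 1 + 1 / y := by field_simp
      rw [this]
      linarith
  have := key (Set.self_mem_Ici) (Set.mem_Ici.mpr (le_of_lt hx)) hx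
  simp only [hg, Real.log_one] at this
  linarith

theorem stmt16 (x : ℝ) (hx : x > 1) :
    (x ^ 2 - 1) * Real.log x < 4 * x * (1 - x + x * Real.log x) := by
  have h := aux_log_lb x hx
  have h3 : (0:ℝ) < 3 * x ^ 2 + 1 := by nlinarith
  have h4 := mul_lt_mul_of_pos_left h h3
  have hx1 : (0:ℝ) < x + 1 := by linarith
  nlinarith [sq_nonneg (x - 1), mul_pos hx1 hx1, sq_nonneg x]
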